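/- For every m ∈ ℕ and ω ∈ ℂ, the determinant of the m×m matrix Δ with entries Δ_{i,j} = 1/Γ(ω + j − i + 1) (indices 1 ≤ i,j ≤ m) equals ∏_{j=1}^m Γ(j)/Γ(ω + j). In particular Δ is invertible unless ω is a negative integer. -/
import Mathlib


open Finset Polynomial Matrix

lemma gamma_inv_step (w : ℂ) : (Complex.Gamma w)⁻¹ = w * (Complex.Gamma (w+1))⁻¹ := by
  rcases eq_or_ne w 0 with h | h
  · simp [h, Complex.Gamma_zero]
  · rw [Complex.Gamma_add_one w h, mul_inv, ← mul_assoc, mul_inv_cancel₀ h, one_mul]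

lemma gamma_inv_sub (z : ℂ) (k : ℕ) :
    (Complex.Gamma (z - k))⁻¹ = (∏ r ∈ Finset.range k, (z - ((r : ℂ) + 1))) * (Complex.Gamma z)⁻¹ := by
  induction k with
  | zero => simp
  | succ k ih =>
    have h1 : z - ((k + 1 : ℕ) : ℂ) + 1 = z - k := by push_cast; ring
    rw [Finset.prod_range_succ, gamma_inv_step (z - ((k + 1 : ℕ) : ℂ)), h1, ih]
    push_cast
    ring

lemma nat_prod_sub (n : ℕ) : (∏ i ∈ Finset.range n, (n - i)) = Nat.factorial n := by
  have h : ∀ i ∈ Finset.range n, n - i = (n - 1 - i) + 1 := by intro i hi; simp at hi; omega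
  rw [Finset.prod_congr rfl h, Finset.prod_range_reflect (fun i => i + 1) n]
  exact Finset.prod_range_add_one_eq_factorial n

lemma complex_prod_sub (n : ℕ) : (∏ i ∈ Finset.range n, ((n : ℂ) - i)) = (Nat.factorial n : ℂ) := by
  rw [← nat_prod_sub n, Nat.cast_prod]
  refine Finset.prod_congr rfl fun i hi => ?_
  simp only [Finset.mem_range] at hi
  rw [Nat.cast_sub hi.le]

lemma fin_vandermonde_prod (m : ℕ) :
    (∏ i : Fin m, ∏ j ∈ Finset.Ioi i, ((j : ℂ) - (i : ℂ))) =
      ∏ j ∈ Finset.range m, (Nat.factorial j : ℂ) := by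
  rw [Finset.prod_comm' (t' := Finset.univ) (s' := fun j => Finset.Iio j)
    (by intro i j; simp [Finset.mem_Ioi, Finset.mem_Iio])]
  rw [← Fin.prod_univ_eq_prod_range (fun j => ((Nat.factorial (j:ℕ)) : ℂ))]
  refine Finset.prod_congr rfl fun j _ => ?_
  have : (∏ i ∈ Finset.Iio j, ((j : ℂ) - (i : ℂ)))
      = ∏ i ∈ Finset.Iio (j : ℕ), ((j : ℂ) - (i : ℂ)) := by
    rw [← Fin.map_valEmbedding_Iio, Finset.prod_map]
    rfl
  rw [this, Nat.Iio_eq_range, complex_prod_sub]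



/-- For `m ∈ ℕ` and `ω ∈ ℂ`, the determinant of the `m × m` matrix with
entries `1/Γ(ω + j - i + 1)` (1-indexed; here zero-indexed via `i, j : Fin m`) equals
`∏_{j=1}^m Γ(j)/Γ(ω + j)`; in particular it is invertible unless `ω` is a negative
integer. (Here `1/Γ` is the entire reciprocal Gamma function, vanishing at the poles.) -/
theorem stmt3 (m : ℕ) (ω : ℂ) :
    (Matrix.of fun i j : Fin m =>
        (Complex.Gamma (ω + (j : ℕ) - (i : ℕ) + 1))⁻¹).det
      = ∏ j ∈ Finset.range m, Complex.Gamma ((j : ℂ) + 1) / Complex.Gamma (ω + (j : ℕ) + 1) ∧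
    ((∀ n : ℕ, ω ≠ -((n : ℂ) + 1)) →
      IsUnit (Matrix.of fun i j : Fin m =>
        (Complex.Gamma (ω + (j : ℕ) - (i : ℕ) + 1))⁻¹).det) := by
  set v : Fin m → ℂ := fun j => ω + (j : ℕ) + 1 with hv
  set p : Fin m → Polynomial ℂ := fun i => ∏ r ∈ Finset.range (i : ℕ), (X - C ((r : ℂ) + 1))
    with hp
  set A : Matrix (Fin m) (Fin m) ℂ :=
    Matrix.of fun i j : Fin m => ∏ r ∈ Finset.range (i : ℕ), (v j - ((r : ℂ) + 1)) with hA
  have hmonic : ∀ i, (p i).Monic := fun i => monic_prod_of_monic _ _ fun r _ => monic_X_sub_C _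
  have hdeg : ∀ i : Fin m, (p i).natDegree = (i : ℕ) := by
    intro i
    rw [hp, Polynomial.natDegree_prod _ _ (fun r _ => X_sub_C_ne_zero _)]
    simp only [natDegree_X_sub_C]
    simp
  have key : (Matrix.of fun i j : Fin m => (Complex.Gamma (ω + (j : ℕ) - (i : ℕ) + 1))⁻¹)
      = Matrix.of fun i j : Fin m => (Complex.Gamma (v j))⁻¹ * A i j := by
    ext i j
    have h1 : ω + (j : ℕ) - (i : ℕ) + 1 = v j - (i : ℕ) := by rw [hv]; ring
    rw [Matrix.of_apply, Matrix.of_apply, h1, gamma_inv_sub, mul_comm]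
    rfl
  have hAT : A = (Matrix.of fun i j : Fin m => (p j).eval (v i))ᵀ := by
    ext i j
    simp only [Matrix.transpose_apply, Matrix.of_apply, hA, hp, Polynomial.eval_prod,
      eval_sub, eval_X, eval_C]
  have hdet : A.det = ∏ j ∈ Finset.range m, (Nat.factorial j : ℂ) := by
    rw [hAT, Matrix.det_transpose,
      ← Matrix.det_eval_matrixOfPolynomials_eq_det_vandermonde v p hdeg hmonic,
      Matrix.det_vandermonde, ← fin_vandermonde_prod m]
    refine Finset.prod_congr rfl fun i _ => Finset.prod_congr rfl fun j _ => ?_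
    rw [hv]; ring
  have main : (Matrix.of fun i j : Fin m =>
      (Complex.Gamma (ω + (j : ℕ) - (i : ℕ) + 1))⁻¹).det
      = ∏ j ∈ Finset.range m, Complex.Gamma ((j : ℂ) + 1) / Complex.Gamma (ω + (j : ℕ) + 1) := by
    rw [key, Matrix.det_mul_row, hdet]
    have h2 : ∀ j ∈ Finset.range m, Complex.Gamma ((j : ℂ) + 1) / Complex.Gamma (ω + (j : ℕ) + 1)
        = (Nat.factorial j : ℂ) * (Complex.Gamma (ω + (j : ℕ) + 1))⁻¹ := by
      intro j _
      rw [Complex.Gamma_nat_eq_factorial, div_eq_mul_inv]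
    rw [Finset.prod_congr rfl h2, Finset.prod_mul_distrib,
      ← Fin.prod_univ_eq_prod_range (fun j => (Complex.Gamma (ω + (j : ℕ) + 1))⁻¹) m]
    ring
  refine ⟨main, fun hω => ?_⟩
  rw [main, isUnit_iff_ne_zero]
  rw [Finset.prod_ne_zero_iff]
  intro j _
  apply div_ne_zero
  · rw [Complex.Gamma_nat_eq_factorial]
    exact_mod_cast (Nat.factorial_pos j).ne'
  · apply Complex.Gamma_ne_zero
    intro n h
    apply hω (n + j)
    push_cast
    linear_combination h
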